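/- Let S be a formula over ℂ. Then S is (J+ss)-injective if and only if there exist a vertex Lie algebra V over ℂ and an injective linear map φ : S → V such that the map φ̃ : ℂ[D]⊗S → V defined by φ̃(D^k⊗u) = D^k(φ(u)) satisfies φ̃(uₙv) = φ(u)ₙφ(v) for all u,v ∈ S and n ∈ ℕ. -/

import Mathlib

open scoped BigOperators

noncomputable section

universe u

variable {S : Type u} [AddCommGroup S] [Module ℂ S]

/-- The operator `D` on `ℂ[D]⊗S` (realized as `ℕ →₀ S`, where `Finsupp.single k u`
stands for `D^k ⊗ u`): it sends `D^k ⊗ u` to `D^{k+1} ⊗ u`. -/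
def Dop (S : Type*) [AddCommGroup S] [Module ℂ S] : (ℕ →₀ S) →ₗ[ℂ] (ℕ →₀ S) :=
  Finsupp.lmapDomain S ℂ (fun k => k + 1)

/-- A formula over `ℂ`: a vector space `S` with bilinear maps
`Fₙ : S × S → ℂ[D]⊗S` (`n : ℕ`), vanishing for `n` sufficiently large. -/
structure Formula (S : Type*) [AddCommGroup S] [Module ℂ S] where
  F : ℕ → S →ₗ[ℂ] S →ₗ[ℂ] (ℕ →₀ S)
  trunc : ∀ u v : S, ∃ N : ℕ, ∀ n : ℕ, N ≤ n → F n u v = 0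

/-- The defining properties of the extension of the products of a formula `S`
to `ℂ[D]⊗S`: it agrees with `Fₙ` on `S`, and satisfies `(DA)ₙB = −n·A_{n−1}B`,
`(DA)₀B = 0` and `D(AₙB) = (DA)ₙB + Aₙ(DB)`. -/
def ExtProp (A : Formula S)
    (M : ℕ → (ℕ →₀ S) →ₗ[ℂ] (ℕ →₀ S) →ₗ[ℂ] (ℕ →₀ S)) : Prop :=
  (∀ (n : ℕ) (u v : S), M n (Finsupp.single 0 u) (Finsupp.single 0 v) = A.F n u v) ∧
  (∀ (n : ℕ) (x y : ℕ →₀ S), M (n + 1) (Dop S x) y = (-((n : ℂ) + 1)) • M n x y) ∧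
  (∀ x y : ℕ →₀ S, M 0 (Dop S x) y = 0) ∧
  (∀ (n : ℕ) (x y : ℕ →₀ S),
    Dop S (M n x y) = M n (Dop S x) y + M n x (Dop S y))


/-- A (two-sided, `D`-invariant) ideal of `ℂ[D]⊗S` with respect to the extended
products `M`. -/
def FIsIdeal (M : ℕ → (ℕ →₀ S) →ₗ[ℂ] (ℕ →₀ S) →ₗ[ℂ] (ℕ →₀ S))
    (I : Submodule ℂ (ℕ →₀ S)) : Prop :=
  (∀ a ∈ I, Dop S a ∈ I) ∧
  ∀ (n : ℕ) (x : ℕ →₀ S), ∀ a ∈ I, M n x a ∈ I ∧ M n a x ∈ I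

/-- The commutator defects of a formula, inside `ℂ[D]⊗S`. -/
def JDefects (A : Formula S)
    (M : ℕ → (ℕ →₀ S) →ₗ[ℂ] (ℕ →₀ S) →ₗ[ℂ] (ℕ →₀ S)) : Set (ℕ →₀ S) :=
  {x : ℕ →₀ S | ∃ (u v w : S) (m n : ℕ),
    x = M m (Finsupp.single 0 u) (M n (Finsupp.single 0 v) (Finsupp.single 0 w))
      - M n (Finsupp.single 0 v) (M m (Finsupp.single 0 u) (Finsupp.single 0 w))
      - ∑ᶠ i : ℕ, ((Nat.choose m i : ℂ)) • M (m + n - i) (A.F i u v) (Finsupp.single 0 w)}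

/-- The skew defects of a formula, inside `ℂ[D]⊗S`. -/
def SSDefects (A : Formula S) : Set (ℕ →₀ S) :=
  {x : ℕ →₀ S | ∃ (u v : S) (n : ℕ),
    x = A.F n u v
      + ∑ᶠ k : ℕ, (((-1 : ℂ) ^ (n + k)) / (Nat.factorial k : ℂ)) •
          ((Dop S ^ k) (A.F (n + k) v u))}

/-- A bundled vertex Lie algebra over `ℂ`. -/
structure VLBundle : Type (u + 1) where
  carrier : Type u
  [grp : AddCommGroup carrier]
  [mod : Module ℂ carrier]
  D : carrier →ₗ[ℂ] carrier
  mul : ℕ → carrier →ₗ[ℂ] carrier →ₗ[ℂ] carrier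
  trunc : ∀ u v : carrier, ∃ N : ℕ, ∀ n : ℕ, N ≤ n → mul n u v = 0
  dLeft : ∀ (n : ℕ) (u v : carrier), mul (n + 1) (D u) v = (-((n : ℂ) + 1)) • mul n u v
  dLeftZero : ∀ u v : carrier, mul 0 (D u) v = 0
  leibniz : ∀ (n : ℕ) (u v : carrier), D (mul n u v) = mul n (D u) v + mul n u (D v)
  skew : ∀ (n : ℕ) (u v : carrier),
    mul n u v =
      -∑ᶠ k : ℕ, (((-1 : ℂ) ^ (n + k)) / (Nat.factorial k : ℂ)) • ((D ^ k) (mul (n + k) v u))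
  jacobi : ∀ (k m n : ℕ) (u v w : carrier),
    ∑ᶠ i : ℕ, ((-1 : ℂ) ^ i * (Nat.choose k i : ℂ)) •
        (mul (m + k - i) u (mul (n + i) v w)
          - ((-1 : ℂ) ^ k) • mul (n + k - i) v (mul (m + i) u w))
      = ∑ᶠ i : ℕ, ((Nat.choose m i : ℂ)) • mul (m + n - i) (mul (k + i) u v) w

attribute [instance] VLBundle.grp VLBundle.mod


section Stmt14Aux

variable {A : Formula S} {M : ℕ → (ℕ →₀ S) →ₗ[ℂ] (ℕ →₀ S) →ₗ[ℂ] (ℕ →₀ S)}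

lemma finsum_eq_range {E : Type*} [AddCommMonoid E] {f : ℕ → E} {N : ℕ}
    (h : ∀ n, N ≤ n → f n = 0) : ∑ᶠ n, f n = ∑ n ∈ Finset.range N, f n := by
  apply finsum_eq_sum_of_support_subset
  intro x hx
  simp only [Finset.coe_range, Set.mem_Iio]
  by_contra hc
  exact hx (h x (le_of_not_gt hc))

lemma support_finite_of_bound {E : Type*} [AddCommMonoid E] {f : ℕ → E} {N : ℕ}
    (h : ∀ n, N ≤ n → f n = 0) : (Function.support f).Finite := by
  apply Set.Finite.subset (Finset.range N).finite_toSet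
  intro x hx
  simp only [Finset.coe_range, Set.mem_Iio]
  by_contra hc
  exact hx (h x (le_of_not_gt hc))

lemma Dop_single (k : ℕ) (u : S) :
    Dop S (Finsupp.single k u) = Finsupp.single (k + 1) u := by
  simp [Dop, Finsupp.lmapDomain, Finsupp.mapDomain_single]

lemma Dop_pow_single (k : ℕ) (u : S) :
    (Dop S ^ k) (Finsupp.single 0 u) = Finsupp.single k u := by
  induction k with
  | zero => simp
  | succ k ih => rw [pow_succ', Module.End.mul_apply, ih, Dop_single]

lemma Mdl (hM : ExtProp A M) (n : ℕ) (x y : ℕ →₀ S) :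
    M n (Dop S x) y = (-(n : ℂ)) • M (n - 1) x y := by
  cases n with
  | zero => simp [hM.2.2.1]
  | succ n =>
      rw [hM.2.1 n x y]
      norm_num

lemma Mdr (hM : ExtProp A M) (n : ℕ) (x y : ℕ →₀ S) :
    M n x (Dop S y) = Dop S (M n x y) - M n (Dop S x) y := by
  rw [hM.2.2.2 n x y]; abel

lemma exists_bound (hM : ExtProp A M) (x y : ℕ →₀ S) :
    ∃ N, ∀ n, N ≤ n → M n x y = 0 := by
  have hD : ∀ x y : ℕ →₀ S, (∃ N, ∀ n, N ≤ n → M n x y = 0) →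
      (∃ N, ∀ n, N ≤ n → M n (Dop S x) y = 0) := by
    rintro x y ⟨N, hN⟩
    exact ⟨N + 1, fun n hn => by
      rw [Mdl hM n x y, hN (n - 1) (by omega), smul_zero]⟩
  have hD2 : ∀ x y : ℕ →₀ S, (∃ N, ∀ n, N ≤ n → M n x y = 0) →
      (∃ N, ∀ n, N ≤ n → M n x (Dop S y) = 0) := by
    rintro x y h
    obtain ⟨N', hN'⟩ := hD x y h
    obtain ⟨N, hN⟩ := h
    exact ⟨N + N' + 1, fun n hn => by
      rw [Mdr hM n x y, hN n (by omega), hN' n (by omega), map_zero, sub_zero]⟩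
  have hs : ∀ (j k : ℕ) (u v : S), ∃ N, ∀ n, N ≤ n → M n (Finsupp.single j u) (Finsupp.single k v) = 0 := by
    intro j k u v
    induction j with
    | zero =>
        induction k with
        | zero =>
            obtain ⟨N, hN⟩ := A.trunc u v
            exact ⟨N, fun n hn => by rw [hM.1 n u v, hN n hn]⟩
        | succ k ihk =>
            have := hD2 _ _ ihk
            rwa [Dop_single] at this
    | succ j ihj =>
        have := hD _ _ ihj
        rwa [Dop_single] at this
  induction x using Finsupp.induction_linear with
  | zero => exact ⟨0, fun n _ => by simp⟩
  | add f g hf hg =>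
      obtain ⟨N1, h1⟩ := hf
      obtain ⟨N2, h2⟩ := hg
      exact ⟨N1 + N2, fun n hn => by
        rw [map_add, LinearMap.add_apply, h1 n (by omega), h2 n (by omega), add_zero]⟩
  | single j u =>
      induction y using Finsupp.induction_linear with
      | zero => exact ⟨0, fun n _ => by simp⟩
      | add f g hf hg =>
          obtain ⟨N1, h1⟩ := hf
          obtain ⟨N2, h2⟩ := hg
          exact ⟨N1 + N2, fun n hn => by
            rw [map_add, h1 n (by omega), h2 n (by omega), add_zero]⟩
      | single k v => exact hs j k u v


/-- Coefficients in the half skew-symmetry. -/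
def skc (n k : ℕ) : ℂ := ((-1 : ℂ) ^ (n + k)) / (Nat.factorial k : ℂ)

lemma skc_succ_left (n k : ℕ) : skc (n + 1) k = -skc n k := by
  have : n + 1 + k = (n + k) + 1 := by ring
  rw [skc, skc, this, pow_succ]
  ring

lemma skc_mul_succ (n k : ℕ) : ((k : ℂ) + 1) * skc n (k + 1) = -skc n k := by
  have h1 : n + (k + 1) = (n + k) + 1 := by ring
  have h2 : ((Nat.factorial (k+1) : ℂ)) = ((k : ℂ) + 1) * (Nat.factorial k : ℂ) := by
    rw [Nat.factorial_succ]; push_cast; ring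
  have hk : ((k : ℂ) + 1) ≠ 0 := by
    have h : ((k + 1 : ℕ) : ℂ) ≠ 0 := Nat.cast_ne_zero.2 (Nat.succ_ne_zero k)
    push_cast at h; exact h
  have hf : (Nat.factorial k : ℂ) ≠ 0 := Nat.cast_ne_zero.2 (Nat.factorial_ne_zero k)
  rw [skc, skc, h1, h2, pow_succ]
  field_simp

lemma sum_shift {E : Type*} [AddCommGroup E] (f h : ℕ → E) (K : ℕ)
    (h0 : h 0 = 0) (hsucc : ∀ k, h (k + 1) = f k) (hK : f K = 0) :
    ∑ k ∈ Finset.range (K + 1), f k = ∑ k ∈ Finset.range (K + 1), h k := by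
  rw [Finset.sum_range_succ, hK, add_zero, Finset.sum_range_succ', h0, add_zero]
  exact Finset.sum_congr rfl fun k _ => (hsucc k).symm

lemma Dop_pow_succ_apply (k : ℕ) (z : ℕ →₀ S) :
    (Dop S ^ (k + 1)) z = (Dop S ^ k) (Dop S z) := by
  rw [pow_succ, Module.End.mul_apply]

/-- The skew defect expression, for general elements of `ℂ[D]⊗S`. -/
noncomputable def SkD (M : ℕ → (ℕ →₀ S) →ₗ[ℂ] (ℕ →₀ S) →ₗ[ℂ] (ℕ →₀ S))
    (n : ℕ) (x y : ℕ →₀ S) : ℕ →₀ S :=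
  M n x y + ∑ᶠ k : ℕ, skc n k • ((Dop S ^ k) (M (n + k) y x))

lemma key_left (hM : ExtProp A M) (n : ℕ) (x y : ℕ →₀ S) :
    ∑ᶠ k : ℕ, skc n k • (Dop S ^ k) (M (n + k) y (Dop S x))
      = (-(n : ℂ)) • ∑ᶠ k : ℕ, skc (n - 1) k • (Dop S ^ k) (M ((n - 1) + k) y x) := by
  obtain ⟨N, hN⟩ := exists_bound hM y x
  have hpt : ∀ k : ℕ, skc n k • (Dop S ^ k) (M (n + k) y (Dop S x))
      = skc n k • (Dop S ^ (k + 1)) (M (n + k) y x)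
        + (skc n k * ((n : ℂ) + (k : ℂ))) • (Dop S ^ k) (M (n + k - 1) y x) := by
    intro k
    rw [Mdr hM (n + k) y x, Mdl hM (n + k) y x, map_sub, map_smul, ← Dop_pow_succ_apply]
    push_cast
    module
  have hb1 : ∀ k, N + 1 ≤ k → skc n k • (Dop S ^ (k + 1)) (M (n + k) y x) = 0 := by
    intro k hk; rw [hN (n + k) (by omega)]; simp
  have hb1' : ∀ k, N ≤ k → skc n k • (Dop S ^ (k + 1)) (M (n + k) y x) = 0 := by
    intro k hk; rw [hN (n + k) (by omega)]; simp
  have hb2 : ∀ k, N + 1 ≤ k →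
      (skc n k * ((n : ℂ) + (k : ℂ))) • (Dop S ^ k) (M (n + k - 1) y x) = 0 := by
    intro k hk; rw [hN (n + k - 1) (by omega)]; simp
  rw [finsum_congr hpt,
    finsum_add_distrib (support_finite_of_bound hb1) (support_finite_of_bound hb2),
    finsum_eq_range (N := N + 1) hb1,
    finsum_eq_range (N := N + 1) hb2,
    finsum_eq_range (N := N + 1) (fun k hk => by rw [hN ((n - 1) + k) (by omega)]; simp),
    Finset.smul_sum]
  rcases n with _ | m
  · have hz : ∀ k ∈ Finset.range (N + 1),
        (-((0 : ℕ) : ℂ)) • (skc (0 - 1) k • (Dop S ^ k) (M ((0 - 1) + k) y x)) = (0 : ℕ →₀ S) := by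
      intro k _; simp
    rw [Finset.sum_congr rfl hz, Finset.sum_const, smul_zero]
    have hshift : (∑ k ∈ Finset.range (N + 1), skc 0 k • (Dop S ^ (k + 1)) (M (0 + k) y x))
        = ∑ k ∈ Finset.range (N + 1),
            -((skc 0 k * (((0 : ℕ) : ℂ) + (k : ℂ))) • (Dop S ^ k) (M (0 + k - 1) y x)) := by
      apply sum_shift
      · simp
      · intro k
        have hc : skc 0 (k + 1) * (((0 : ℕ) : ℂ) + (((k + 1 : ℕ)) : ℂ)) = -skc 0 k := by
          push_cast
          have := skc_mul_succ 0 k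
          linear_combination this
        rw [hc, neg_smul, neg_neg]
        norm_num
      · exact hb1' N le_rfl
    rw [hshift, Finset.sum_neg_distrib]
    abel
  · have hshift : (∑ k ∈ Finset.range (N + 1), skc (m + 1) k • (Dop S ^ (k + 1)) (M (m + 1 + k) y x))
        = ∑ k ∈ Finset.range (N + 1),
            ((-(((m + 1 : ℕ)) : ℂ)) • (skc (m + 1 - 1) k • (Dop S ^ k) (M ((m + 1 - 1) + k) y x))
              - (skc (m + 1) k * (((m + 1 : ℕ) : ℂ) + (k : ℂ))) •
                  (Dop S ^ k) (M (m + 1 + k - 1) y x)) := by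
      apply sum_shift
      · have h0 : skc (m + 1) 0 = -skc m 0 := skc_succ_left m 0
        simp only [Nat.add_sub_cancel, Nat.add_zero, Nat.zero_add, h0, Nat.cast_zero, add_zero]
        push_cast
        module
      · intro k
        simp only [show (m + 1 - 1) + (k + 1) = m + 1 + k from by omega,
          show m + 1 + (k + 1) - 1 = m + 1 + k from by omega,
          show m + 1 - 1 = m from by omega, show m + (k + 1) = m + 1 + k from by omega]
        rw [smul_smul, ← sub_smul]
        congr 1
        have h1 := skc_succ_left m (k + 1)
        have h2 := skc_succ_left m k
        have h3 := skc_mul_succ m k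
        push_cast at *
        linear_combination (-((m : ℂ) + (k : ℂ) + 2)) * h1 - h2 + h3
      · exact hb1' N le_rfl
    rw [hshift, Finset.sum_sub_distrib]
    abel


lemma Dop_pow_succ_apply' (k : ℕ) (z : ℕ →₀ S) :
    Dop S ((Dop S ^ k) z) = (Dop S ^ (k + 1)) z := by
  rw [pow_succ', Module.End.mul_apply]

lemma SkD_dl (hM : ExtProp A M) (n : ℕ) (x y : ℕ →₀ S) :
    SkD M n (Dop S x) y = (-(n : ℂ)) • SkD M (n - 1) x y := by
  rw [SkD, SkD, key_left hM n x y, Mdl hM n x y, smul_add]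

lemma SkD_dr (hM : ExtProp A M) (n : ℕ) (x y : ℕ →₀ S) :
    SkD M n x (Dop S y) = Dop S (SkD M n x y) - SkD M n (Dop S x) y := by
  obtain ⟨N, hN⟩ := exists_bound hM y x
  have hA : ∀ k, N + 1 ≤ k → skc n k • (Dop S ^ k) (M (n + k) (Dop S y) x) = 0 := by
    intro k hk; rw [Mdl hM (n + k) y x, hN (n + k - 1) (by omega)]; simp
  have hB : ∀ k, N + 1 ≤ k → skc n k • (Dop S ^ (k + 1)) (M (n + k) y x) = 0 := by
    intro k hk; rw [hN (n + k) (by omega)]; simp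
  rw [SkD, SkD, SkD, Mdr hM n x y]
  have e1 : ∑ᶠ k : ℕ, skc n k • (Dop S ^ k) (M (n + k) y (Dop S x))
      = (∑ᶠ k : ℕ, skc n k • (Dop S ^ (k + 1)) (M (n + k) y x))
        - ∑ᶠ k : ℕ, skc n k • (Dop S ^ k) (M (n + k) (Dop S y) x) := by
    rw [← finsum_sub_distrib (support_finite_of_bound hB) (support_finite_of_bound hA)]
    apply finsum_congr; intro k
    rw [Mdr hM (n + k) y x, map_sub, ← Dop_pow_succ_apply, smul_sub]
  have e2 : Dop S (∑ᶠ k : ℕ, skc n k • (Dop S ^ k) (M (n + k) y x))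
      = ∑ᶠ k : ℕ, skc n k • (Dop S ^ (k + 1)) (M (n + k) y x) := by
    have h3 := (Dop S).toAddMonoidHom.map_finsum
      (f := fun k => skc n k • (Dop S ^ k) (M (n + k) y x))
      (support_finite_of_bound (N := N) (fun k hk => by rw [hN (n + k) (by omega)]; simp))
    simp only [LinearMap.toAddMonoidHom_coe] at h3
    rw [h3]
    apply finsum_congr; intro k
    rw [map_smul, Dop_pow_succ_apply']
  rw [map_add, e1, e2]
  abel

lemma SkD_zero_left (n : ℕ) (y : ℕ →₀ S) : SkD M n 0 y = 0 := by
  simp [SkD]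

lemma SkD_zero_right (n : ℕ) (x : ℕ →₀ S) : SkD M n x 0 = 0 := by
  simp [SkD]

lemma SkD_add_left (hM : ExtProp A M) (n : ℕ) (x1 x2 y : ℕ →₀ S) :
    SkD M n (x1 + x2) y = SkD M n x1 y + SkD M n x2 y := by
  obtain ⟨N1, h1⟩ := exists_bound hM y x1
  obtain ⟨N2, h2⟩ := exists_bound hM y x2
  rw [SkD, SkD, SkD]
  have e : ∀ k : ℕ, skc n k • (Dop S ^ k) (M (n + k) y (x1 + x2))
      = skc n k • (Dop S ^ k) (M (n + k) y x1) + skc n k • (Dop S ^ k) (M (n + k) y x2) := by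
    intro k; rw [map_add, map_add, smul_add]
  rw [finsum_congr e, finsum_add_distrib
      (support_finite_of_bound (N := N1) (fun k hk => by rw [h1 (n + k) (by omega)]; simp))
      (support_finite_of_bound (N := N2) (fun k hk => by rw [h2 (n + k) (by omega)]; simp)),
    map_add, LinearMap.add_apply]
  abel

lemma SkD_add_right (hM : ExtProp A M) (n : ℕ) (x y1 y2 : ℕ →₀ S) :
    SkD M n x (y1 + y2) = SkD M n x y1 + SkD M n x y2 := by
  obtain ⟨N1, h1⟩ := exists_bound hM y1 x
  obtain ⟨N2, h2⟩ := exists_bound hM y2 x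
  rw [SkD, SkD, SkD]
  have e : ∀ k : ℕ, skc n k • (Dop S ^ k) (M (n + k) (y1 + y2) x)
      = skc n k • (Dop S ^ k) (M (n + k) y1 x) + skc n k • (Dop S ^ k) (M (n + k) y2 x) := by
    intro k; rw [map_add, LinearMap.add_apply, map_add, smul_add]
  rw [finsum_congr e, finsum_add_distrib
      (support_finite_of_bound (N := N1) (fun k hk => by rw [h1 (n + k) (by omega)]; simp))
      (support_finite_of_bound (N := N2) (fun k hk => by rw [h2 (n + k) (by omega)]; simp)),
    map_add]
  abel

lemma SkD_mem (hM : ExtProp A M) {I : Submodule ℂ (ℕ →₀ S)} (hI : FIsIdeal M I)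
    (hss : SSDefects A ⊆ ↑I) : ∀ (x y : ℕ →₀ S) (n : ℕ), SkD M n x y ∈ I := by
  have hDx : ∀ x y : ℕ →₀ S, (∀ n, SkD M n x y ∈ I) → ∀ n, SkD M n (Dop S x) y ∈ I := by
    intro x y h n; rw [SkD_dl hM]; exact I.smul_mem _ (h _)
  have hDy : ∀ x y : ℕ →₀ S, (∀ n, SkD M n x y ∈ I) → ∀ n, SkD M n x (Dop S y) ∈ I := by
    intro x y h n; rw [SkD_dr hM]; exact sub_mem (hI.1 _ (h n)) (hDx x y h n)
  have hsingle : ∀ (j k : ℕ) (u v : S) (n : ℕ),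
      SkD M n (Finsupp.single j u) (Finsupp.single k v) ∈ I := by
    intro j
    induction j with
    | zero =>
        intro k
        induction k with
        | zero =>
            intro u v n
            refine hss ⟨u, v, n, ?_⟩
            rw [SkD, hM.1]
            congr 1
            exact finsum_congr fun k => by rw [hM.1, skc]
        | succ k ih =>
            intro u v n
            rw [← Dop_single]
            exact hDy _ _ (fun n => ih u v n) n
    | succ j ih =>
        intro k u v n
        rw [← Dop_single]
        exact hDx _ _ (fun n => ih k u v n) n
  suffices h : ∀ x y : ℕ →₀ S, ∀ n, SkD M n x y ∈ I by exact h
  intro x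
  induction x using Finsupp.induction_linear with
  | zero => intro y n; rw [SkD_zero_left]; exact zero_mem I
  | add f g hf hg => intro y n; rw [SkD_add_left hM]; exact add_mem (hf y n) (hg y n)
  | single j u =>
      intro y
      induction y using Finsupp.induction_linear with
      | zero => intro n; rw [SkD_zero_right]; exact zero_mem I
      | add f g hf hg => intro n; rw [SkD_add_right hM]; exact add_mem (hf n) (hg n)
      | single k v => exact hsingle j k u v


lemma sum_shift0 {E : Type*} [AddCommGroup E] (s : ℕ → E) (K : ℕ) (h0 : s 0 = 0) :
    ∑ i ∈ Finset.range (K + 1), s i = ∑ i ∈ Finset.range K, s (i + 1) := by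
  rw [Finset.sum_range_succ', h0, add_zero]

lemma cast_choose_succ_mul (m i : ℕ) :
    (((i : ℂ)) + 1) * (Nat.choose (m + 1) (i + 1) : ℂ) = ((m : ℂ) + 1) * (Nat.choose m i : ℂ) := by
  have h := Nat.add_one_mul_choose_eq m i
  have h2 : ((Nat.succ m * Nat.choose m i : ℕ) : ℂ)
      = ((Nat.choose (Nat.succ m) (Nat.succ i) * Nat.succ i : ℕ) : ℂ) := congrArg (fun t : ℕ => (t : ℂ)) h
  push_cast at h2
  linear_combination -h2

lemma choose_c (m i : ℕ) :
    ((i : ℂ) + 1) * (Nat.choose m (i + 1) : ℂ) = ((m : ℂ) - (i : ℂ)) * (Nat.choose m i : ℂ) := by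
  rcases le_or_gt i m with h | h
  · have hn := Nat.choose_succ_right_eq m i
    have h2 : ((Nat.choose m (i + 1) * (i + 1) : ℕ) : ℂ) = ((Nat.choose m i * (m - i) : ℕ) : ℂ) := congrArg (fun t : ℕ => (t : ℂ)) hn
    push_cast [Nat.cast_sub h] at h2
    linear_combination h2
  · rw [Nat.choose_eq_zero_of_lt h, Nat.choose_eq_zero_of_lt (by omega)]
    simp

lemma choose_d (m i : ℕ) :
    (m : ℂ) * (Nat.choose (m - 1) i : ℂ) = ((m : ℂ) - (i : ℂ)) * (Nat.choose m i : ℂ) := by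
  rcases m with _ | m'
  · rcases i with _ | i'
    · simp
    · simp [Nat.choose_eq_zero_of_lt (by omega : (0:ℕ) < i' + 1)]
  · rw [show m' + 1 - 1 = m' from rfl]
    rw [← choose_c (m' + 1) i]
    rw [cast_choose_succ_mul m' i]
    push_cast
    ring

lemma Mx_dop_right (hM : ExtProp A M) (p : ℕ) (z w : ℕ →₀ S) :
    M p z (Dop S w) = Dop S (M p z w) + (p : ℂ) • M (p - 1) z w := by
  rw [Mdr hM, Mdl hM]
  module

/-- The commutator (half Jacobi, `k = 0`) defect expression for general elements. -/
noncomputable def Jc (M : ℕ → (ℕ →₀ S) →ₗ[ℂ] (ℕ →₀ S) →ₗ[ℂ] (ℕ →₀ S))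
    (m n : ℕ) (x y w : ℕ →₀ S) : ℕ →₀ S :=
  M m x (M n y w) - M n y (M m x w)
    - ∑ᶠ i : ℕ, ((Nat.choose m i : ℂ)) • M (m + n - i) (M i x y) w

lemma Jc_sum (m n : ℕ) (x y w : ℕ →₀ S) : Jc M m n x y w
    = M m x (M n y w) - M n y (M m x w)
      - ∑ i ∈ Finset.range (m + 1), ((Nat.choose m i : ℂ)) • M (m + n - i) (M i x y) w := by
  rw [Jc, finsum_eq_range (N := m + 1)
    (fun i hi => by rw [Nat.choose_eq_zero_of_lt (by omega)]; simp)]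

lemma Jc_zero_x (m n : ℕ) (y w : ℕ →₀ S) : Jc M m n 0 y w = 0 := by
  simp [Jc_sum]

lemma Jc_zero_y (m n : ℕ) (x w : ℕ →₀ S) : Jc M m n x 0 w = 0 := by
  simp [Jc_sum]

lemma Jc_zero_w (m n : ℕ) (x y : ℕ →₀ S) : Jc M m n x y 0 = 0 := by
  simp [Jc_sum]

lemma Jc_add_x (m n : ℕ) (x1 x2 y w : ℕ →₀ S) :
    Jc M m n (x1 + x2) y w = Jc M m n x1 y w + Jc M m n x2 y w := by
  simp only [Jc_sum, map_add, LinearMap.add_apply, smul_add, Finset.sum_add_distrib]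
  abel

lemma Jc_add_y (m n : ℕ) (x y1 y2 w : ℕ →₀ S) :
    Jc M m n x (y1 + y2) w = Jc M m n x y1 w + Jc M m n x y2 w := by
  simp only [Jc_sum, map_add, LinearMap.add_apply, smul_add, Finset.sum_add_distrib]
  abel

lemma Jc_add_w (m n : ℕ) (x y w1 w2 : ℕ →₀ S) :
    Jc M m n x y (w1 + w2) = Jc M m n x y w1 + Jc M m n x y w2 := by
  simp only [Jc_sum, map_add, LinearMap.add_apply, smul_add, Finset.sum_add_distrib]
  abel

lemma Jc_dl (hM : ExtProp A M) (m n : ℕ) (x y w : ℕ →₀ S) :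
    Jc M m n (Dop S x) y w = (-(m : ℂ)) • Jc M (m - 1) n x y w := by
  rcases m with _ | m
  · simp [Jc_sum, hM.2.2.1]
  · simp only [Jc_sum, Nat.add_sub_cancel]
    rw [Mdl hM (m + 1) x (M n y w), Mdl hM (m + 1) x w, map_smul]
    have hsum : (∑ i ∈ Finset.range (m + 1 + 1),
          ((Nat.choose (m + 1) i : ℂ)) • M (m + 1 + n - i) (M i (Dop S x) y) w)
        = ∑ i ∈ Finset.range (m + 1),
            (-((m : ℂ) + 1)) • (((Nat.choose m i : ℂ)) • M (m + n - i) (M i x y) w) := by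
      have hterm : ∀ i : ℕ, ((Nat.choose (m + 1) i : ℂ)) • M (m + 1 + n - i) (M i (Dop S x) y) w
          = ((Nat.choose (m + 1) i : ℂ) * (-(i : ℂ))) • M (m + 1 + n - i) (M (i - 1) x y) w := by
        intro i
        rw [Mdl hM i x y, map_smul, LinearMap.smul_apply, smul_smul]
      rw [Finset.sum_congr rfl fun i _ => hterm i]
      rw [sum_shift0 _ (m + 1) (by simp)]
      apply Finset.sum_congr rfl
      intro i hi
      simp only [show m + 1 + n - (i + 1) = m + n - i from by omega, Nat.add_sub_cancel]
      rw [smul_smul]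
      congr 1
      have hc := cast_choose_succ_mul m i
      push_cast at hc ⊢
      linear_combination -hc
    rw [hsum, ← Finset.smul_sum]
    push_cast
    module


lemma sum_shift0' {E : Type*} [AddCommGroup E] (s : ℕ → E) (K : ℕ) (h0 : s 0 = 0)
    (hK : s (K + 1) = 0) :
    ∑ i ∈ Finset.range (K + 1), s i = ∑ i ∈ Finset.range (K + 1), s (i + 1) := by
  rw [sum_shift0 s K h0, Finset.sum_range_succ (fun i => s (i + 1)) K, hK, add_zero]

lemma Jc_dm (hM : ExtProp A M) (m n : ℕ) (x y w : ℕ →₀ S) :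
    Jc M m n x (Dop S y) w = (-(n : ℂ)) • Jc M m (n - 1) x y w := by
  have hterm : ∀ i : ℕ, ((Nat.choose m i : ℂ)) • M (m + n - i) (M i x (Dop S y)) w
      = ((Nat.choose m i : ℂ) * (-((m + n - i : ℕ) : ℂ))) • M (m + n - i - 1) (M i x y) w
        + ((Nat.choose m i : ℂ) * (i : ℂ)) • M (m + n - i) (M (i - 1) x y) w := by
    intro i
    rw [Mx_dop_right hM i x y, map_add, LinearMap.add_apply, Mdl hM (m + n - i) (M i x y) w,
      map_smul, LinearMap.smul_apply, smul_add, smul_smul, smul_smul]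
  have hchoosetop : ((Nat.choose m (m + 1) : ℂ)) = 0 := by
    rw [Nat.choose_eq_zero_of_lt (by omega)]; simp
  have hB : (∑ i ∈ Finset.range (m + 1),
        ((Nat.choose m i : ℂ) * (i : ℂ)) • M (m + n - i) (M (i - 1) x y) w)
      = ∑ i ∈ Finset.range (m + 1),
          ((Nat.choose m (i + 1) : ℂ) * (((i + 1 : ℕ)) : ℂ)) • M (m + n - (i + 1)) (M i x y) w := by
    exact sum_shift0'
      (fun i => ((Nat.choose m i : ℂ) * (i : ℂ)) • M (m + n - i) (M (i - 1) x y) w) m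
      (by simp) (by simp [hchoosetop])
  rcases n with _ | n'
  · simp only [Nat.cast_zero, neg_zero, zero_smul]
    rw [Jc_sum]
    have hz : (∑ i ∈ Finset.range (m + 1),
        ((Nat.choose m i : ℂ)) • M (m + 0 - i) (M i x (Dop S y)) w) = 0 := by
      rw [Finset.sum_congr rfl fun i _ => hterm i, Finset.sum_add_distrib, hB,
        ← Finset.sum_add_distrib]
      apply Finset.sum_eq_zero
      intro i hi
      simp only [Finset.mem_range] at hi
      simp only [show m + 0 - i - 1 = m + 0 - (i + 1) from by omega]
      rw [← add_smul]
      apply smul_eq_zero_of_left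
      have hcast : ((m + 0 - i : ℕ) : ℂ) = (m : ℂ) - (i : ℂ) := by
        rw [show m + 0 - i = m - i from by omega, Nat.cast_sub (by omega)]
      rw [hcast]
      have hc := choose_c m i
      push_cast at hc ⊢
      linear_combination hc
    rw [hz]
    simp [hM.2.2.1]
  · rw [Jc_sum, Jc_sum]
    simp only [Nat.add_sub_cancel]
    rw [Mdl hM (n' + 1) y w, Mdl hM (n' + 1) y (M m x w), map_smul]
    simp only [Nat.add_sub_cancel]
    have hsum : (∑ i ∈ Finset.range (m + 1),
          ((Nat.choose m i : ℂ)) • M (m + (n' + 1) - i) (M i x (Dop S y)) w)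
        = ∑ i ∈ Finset.range (m + 1),
            (-((n' : ℂ) + 1)) • (((Nat.choose m i : ℂ)) • M (m + n' - i) (M i x y) w) := by
      rw [Finset.sum_congr rfl fun i _ => hterm i, Finset.sum_add_distrib, hB,
        ← Finset.sum_add_distrib]
      apply Finset.sum_congr rfl
      intro i hi
      simp only [Finset.mem_range] at hi
      simp only [show m + (n' + 1) - i - 1 = m + n' - i from by omega,
        show m + (n' + 1) - (i + 1) = m + n' - i from by omega]
      rw [← add_smul, smul_smul]
      congr 1
      have hcast : ((m + (n' + 1) - i : ℕ) : ℂ) = (m : ℂ) + (n' : ℂ) + 1 - (i : ℂ) := by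
        rw [Nat.cast_sub (by omega)]; push_cast; ring
      rw [hcast]
      have hc := choose_c m i
      push_cast at hc ⊢
      linear_combination hc
    rw [hsum, ← Finset.smul_sum]
    push_cast
    module


lemma Jc_dr (hM : ExtProp A M) (m n : ℕ) (x y w : ℕ →₀ S) :
    Jc M m n x y (Dop S w) = Dop S (Jc M m n x y w)
      + (m : ℂ) • Jc M (m - 1) n x y w + (n : ℂ) • Jc M m (n - 1) x y w := by
  have hterm : ∀ i : ℕ, ((Nat.choose m i : ℂ)) • M (m + n - i) (M i x y) (Dop S w)
      = ((Nat.choose m i : ℂ)) • Dop S (M (m + n - i) (M i x y) w)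
        + ((Nat.choose m i : ℂ) * ((m + n - i : ℕ) : ℂ)) • M (m + n - i - 1) (M i x y) w := by
    intro i
    rw [Mx_dop_right hM (m + n - i) (M i x y) w, smul_add, smul_smul]
  have hDop : Dop S (∑ i ∈ Finset.range (m + 1),
        ((Nat.choose m i : ℂ)) • M (m + n - i) (M i x y) w)
      = ∑ i ∈ Finset.range (m + 1),
          ((Nat.choose m i : ℂ)) • Dop S (M (m + n - i) (M i x y) w) := by
    rw [map_sum]
    exact Finset.sum_congr rfl fun i _ => by rw [map_smul]
  rw [Jc_sum, Jc_sum, Jc_sum, Jc_sum]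
  rw [Mx_dop_right hM n y w, map_add, map_smul, Mx_dop_right hM m x (M n y w)]
  rw [Mx_dop_right hM m x w, map_add, map_smul, Mx_dop_right hM n y (M m x w)]
  rw [Finset.sum_congr rfl fun i _ => hterm i, Finset.sum_add_distrib]
  rw [map_sub, map_sub, hDop]
  have hsum : (∑ i ∈ Finset.range (m + 1),
        ((Nat.choose m i : ℂ) * ((m + n - i : ℕ) : ℂ)) • M (m + n - i - 1) (M i x y) w)
      = (m : ℂ) • (∑ i ∈ Finset.range (m - 1 + 1),
          ((Nat.choose (m - 1) i : ℂ)) • M (m - 1 + n - i) (M i x y) w)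
        + (n : ℂ) • (∑ i ∈ Finset.range (m + 1),
          ((Nat.choose m i : ℂ)) • M (m + (n - 1) - i) (M i x y) w) := by
    rcases m with _ | s
    · simp only [Finset.sum_range_one, Nat.cast_zero, zero_smul, zero_add,
        Nat.choose_zero_right, Nat.cast_one, one_mul, one_smul, Nat.sub_zero, Nat.zero_add]
    · rcases n with _ | t
      · simp only [Nat.add_sub_cancel, Nat.cast_zero, zero_smul, add_zero]
        rw [Finset.sum_range_succ]
        have hlast : ((Nat.choose (s + 1) (s + 1) : ℂ) * ((s + 1 + 0 - (s + 1) : ℕ) : ℂ)) •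
            M (s + 1 + 0 - (s + 1) - 1) (M (s + 1) x y) w = 0 := by
          rw [show s + 1 + 0 - (s + 1) = 0 from by omega]
          simp
        rw [hlast, add_zero, Finset.smul_sum]
        apply Finset.sum_congr rfl
        intro i hi
        simp only [Finset.mem_range] at hi
        simp only [show s + 1 + 0 - i - 1 = s + 0 - i from by omega]
        rw [smul_smul]
        congr 1
        have hd := choose_d (s + 1) i
        simp only [Nat.add_sub_cancel] at hd
        have hcast : ((s + 1 + 0 - i : ℕ) : ℂ) = (s : ℂ) + 1 - (i : ℂ) := by
          rw [Nat.cast_sub (by omega)]; push_cast; ring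
        rw [hcast]
        push_cast at hd ⊢
        linear_combination -hd
      · simp only [Nat.add_sub_cancel]
        have hsplit : (∑ i ∈ Finset.range (s + 1 + 1),
              ((Nat.choose (s + 1) i : ℂ) * ((s + 1 + (t + 1) - i : ℕ) : ℂ)) •
                M (s + 1 + (t + 1) - i - 1) (M i x y) w)
            = ∑ i ∈ Finset.range (s + 1 + 1),
                ((((s + 1 : ℕ)) : ℂ) * (Nat.choose s i : ℂ)) • M (s + 1 + t - i) (M i x y) w
              + ∑ i ∈ Finset.range (s + 1 + 1),
                ((((t + 1 : ℕ)) : ℂ) * (Nat.choose (s + 1) i : ℂ)) • M (s + 1 + t - i) (M i x y) w := by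
          rw [← Finset.sum_add_distrib]
          apply Finset.sum_congr rfl
          intro i hi
          simp only [Finset.mem_range] at hi
          simp only [show s + 1 + (t + 1) - i - 1 = s + 1 + t - i from by omega]
          rw [← add_smul]
          congr 1
          have hd := choose_d (s + 1) i
          simp only [Nat.add_sub_cancel] at hd
          have hcast : ((s + 1 + (t + 1) - i : ℕ) : ℂ) = (s : ℂ) + (t : ℂ) + 2 - (i : ℂ) := by
            rw [Nat.cast_sub (by omega)]; push_cast; ring
          rw [hcast]
          push_cast at hd ⊢
          linear_combination -hd
        rw [hsplit]
        congr 1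
        · rw [Finset.sum_range_succ]
          have hlast : ((((s + 1 : ℕ)) : ℂ) * (Nat.choose s (s + 1) : ℂ)) •
              M (s + 1 + t - (s + 1)) (M (s + 1) x y) w = 0 := by
            rw [Nat.choose_eq_zero_of_lt (by omega)]
            simp
          rw [hlast, add_zero, Finset.smul_sum]
          apply Finset.sum_congr rfl
          intro i hi
          simp only [Finset.mem_range] at hi
          simp only [show s + (t + 1) - i = s + 1 + t - i from by omega]
          rw [smul_smul]
        · rw [Finset.smul_sum]
          apply Finset.sum_congr rfl
          intro i hi
          rw [smul_smul]
  rw [hsum]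
  module


lemma Jc_mem (hM : ExtProp A M) {I : Submodule ℂ (ℕ →₀ S)} (hI : FIsIdeal M I)
    (hj : JDefects A M ⊆ ↑I) : ∀ (x y w : ℕ →₀ S) (m n : ℕ), Jc M m n x y w ∈ I := by
  have hDx : ∀ x y w : ℕ →₀ S, (∀ m n, Jc M m n x y w ∈ I) →
      ∀ m n, Jc M m n (Dop S x) y w ∈ I := by
    intro x y w h m n; rw [Jc_dl hM]; exact I.smul_mem _ (h _ _)
  have hDy : ∀ x y w : ℕ →₀ S, (∀ m n, Jc M m n x y w ∈ I) →
      ∀ m n, Jc M m n x (Dop S y) w ∈ I := by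
    intro x y w h m n; rw [Jc_dm hM]; exact I.smul_mem _ (h _ _)
  have hDw : ∀ x y w : ℕ →₀ S, (∀ m n, Jc M m n x y w ∈ I) →
      ∀ m n, Jc M m n x y (Dop S w) ∈ I := by
    intro x y w h m n; rw [Jc_dr hM]
    exact add_mem (add_mem (hI.1 _ (h m n)) (I.smul_mem _ (h _ _))) (I.smul_mem _ (h _ _))
  have hsingle : ∀ (a : ℕ), ∀ (b c : ℕ) (u v z : S) (m n : ℕ),
      Jc M m n (Finsupp.single a u) (Finsupp.single b v) (Finsupp.single c z) ∈ I := by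
    intro a
    induction a with
    | zero =>
        intro b
        induction b with
        | zero =>
            intro c
            induction c with
            | zero =>
                intro u v z m n
                refine hj ⟨u, v, z, m, n, ?_⟩
                rw [Jc]
                congr 1
                exact finsum_congr fun i => by rw [hM.1]
            | succ c ih =>
                intro u v z m n
                rw [← Dop_single]
                exact hDw _ _ _ (fun m n => ih u v z m n) m n
        | succ b ih =>
            intro c u v z m n
            rw [← Dop_single]
            exact hDy _ _ _ (fun m n => ih c u v z m n) m n
    | succ a ih =>
        intro b c u v z m n
        rw [← Dop_single]
        exact hDx _ _ _ (fun m n => ih b c u v z m n) m n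
  intro x
  induction x using Finsupp.induction_linear with
  | zero => intro y w m n; rw [Jc_zero_x]; exact zero_mem I
  | add f g hf hg => intro y w m n; rw [Jc_add_x]; exact add_mem (hf y w m n) (hg y w m n)
  | single a u =>
      intro y
      induction y using Finsupp.induction_linear with
      | zero => intro w m n; rw [Jc_zero_y]; exact zero_mem I
      | add f g hf hg => intro w m n; rw [Jc_add_y]; exact add_mem (hf w m n) (hg w m n)
      | single b v =>
          intro w
          induction w using Finsupp.induction_linear with
          | zero => intro m n; rw [Jc_zero_w]; exact zero_mem I
          | add f g hf hg => intro m n; rw [Jc_add_w]; exact add_mem (hf m n) (hg m n)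
          | single c z => exact hsingle a b c u v z


lemma vander (k j : ℕ) : ∀ m : ℕ,
    (∑ i ∈ Finset.range (k + 1),
      ((-1 : ℂ) ^ i * (Nat.choose k i : ℂ)) * (Nat.choose (m + k - i) j : ℂ))
      = if k ≤ j then (Nat.choose m (j - k) : ℂ) else 0 := by
  induction k with
  | zero => intro m; simp
  | succ k ih =>
      intro m
      have ihm1 := ih (m + 1)
      have ihm := ih m
      rw [Finset.sum_range_succ'] at ihm1
      rw [Finset.sum_range_succ']
      have hterm : ∀ i ∈ Finset.range (k + 1),
          ((-1 : ℂ) ^ (i + 1) * ((Nat.choose (k + 1) (i + 1)) : ℂ)) *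
              ((Nat.choose (m + (k + 1) - (i + 1)) j) : ℂ)
          = ((-1 : ℂ) ^ (i + 1) * ((Nat.choose k (i + 1)) : ℂ)) *
              ((Nat.choose (m + 1 + k - (i + 1)) j) : ℂ)
            - ((-1 : ℂ) ^ i * ((Nat.choose k i) : ℂ)) * ((Nat.choose (m + k - i) j) : ℂ) := by
        intro i _
        rw [Nat.choose_succ_succ, show m + (k + 1) - (i + 1) = m + k - i from by omega,
          show m + 1 + k - (i + 1) = m + k - i from by omega]
        push_cast
        ring
      rw [Finset.sum_congr rfl hterm, Finset.sum_sub_distrib, ihm, Finset.sum_range_succ]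
      have hlast : ((-1 : ℂ) ^ (k + 1) * ((Nat.choose k (k + 1)) : ℂ)) *
          ((Nat.choose (m + 1 + k - (k + 1)) j) : ℂ) = 0 := by
        rw [Nat.choose_succ_self]
        simp
      rw [hlast, add_zero, eq_sub_of_add_eq ihm1]
      simp only [pow_zero, one_mul, Nat.choose_zero_right, Nat.cast_one, Nat.sub_zero]
      rw [show m + 1 + k = m + (k + 1) from by omega]
      rcases le_or_gt (k + 1) j with h | h
      · rw [if_pos (by omega), if_pos (by omega), if_pos h]
        rw [show j - k = (j - (k + 1)) + 1 from by omega, Nat.choose_succ_succ]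
        push_cast
        ring
      · rcases Nat.lt_or_ge j k with h2 | h2
        · rw [if_neg (by omega), if_neg (by omega), if_neg (by omega)]
          ring
        · have hjk : j = k := by omega
          subst hjk
          rw [if_pos le_rfl, if_pos le_rfl, if_neg (by omega)]
          simp


lemma sum_range_offset {E : Type*} [AddCommMonoid E] (a b : ℕ) :
    ∀ g : ℕ → E, (∀ l, l < b → g l = 0) →
    ∑ l ∈ Finset.range (a + b + 1), g l = ∑ j ∈ Finset.range (a + 1), g (b + j) := by
  induction b with
  | zero => intro g _; simp
  | succ b ih =>
      intro g h
      rw [show a + (b + 1) + 1 = (a + b + 1) + 1 from by ring,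
        Finset.sum_range_succ' g (a + b + 1), h 0 (by omega), add_zero,
        ih (fun l => g (l + 1)) (fun l hl => h (l + 1) (by omega))]
      apply Finset.sum_congr rfl
      intro j _
      congr 1
      omega

lemma neg_one_pow_sub (k i : ℕ) (h : i ≤ k) :
    ((-1 : ℂ)) ^ (k - i) = (-1 : ℂ) ^ k * (-1 : ℂ) ^ i := by
  have h2 : k - i + 2 * i = k + i := by omega
  have : ((-1 : ℂ)) ^ (k - i) * ((-1 : ℂ) ^ 2) ^ i = (-1 : ℂ) ^ (k + i) := by
    rw [← pow_mul, ← pow_add, h2]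
  simp only [neg_one_sq, one_pow, mul_one] at this
  rw [this, pow_add]

lemma Jc_general (hM : ExtProp A M) (k m n : ℕ) (x y w : ℕ →₀ S) :
    (∑ᶠ i : ℕ, ((-1 : ℂ) ^ i * (Nat.choose k i : ℂ)) •
        (M (m + k - i) x (M (n + i) y w) - ((-1 : ℂ) ^ k) • M (n + k - i) y (M (m + i) x w)))
      - ∑ᶠ i : ℕ, ((Nat.choose m i : ℂ)) • M (m + n - i) (M (k + i) x y) w
    = ∑ i ∈ Finset.range (k + 1),
        ((-1 : ℂ) ^ i * (Nat.choose k i : ℂ)) • Jc M (m + k - i) (n + i) x y w := by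
  rw [finsum_eq_range (N := k + 1) (f := fun i => ((-1 : ℂ) ^ i * (Nat.choose k i : ℂ)) •
        (M (m + k - i) x (M (n + i) y w) - ((-1 : ℂ) ^ k) • M (n + k - i) y (M (m + i) x w)))
      (fun i hi => by simp [Nat.choose_eq_zero_of_lt (by omega : k < i)]),
    finsum_eq_range (N := m + 1) (f := fun i => ((Nat.choose m i : ℂ)) • M (m + n - i) (M (k + i) x y) w)
      (fun i hi => by simp [Nat.choose_eq_zero_of_lt (by omega : m < i)])]
  have hJc : ∀ i ∈ Finset.range (k + 1),
      ((-1 : ℂ) ^ i * (Nat.choose k i : ℂ)) • Jc M (m + k - i) (n + i) x y w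
      = ((-1 : ℂ) ^ i * (Nat.choose k i : ℂ)) •
          (M (m + k - i) x (M (n + i) y w) - M (n + i) y (M (m + k - i) x w))
        - ((-1 : ℂ) ^ i * (Nat.choose k i : ℂ)) •
            ∑ l ∈ Finset.range (m + k - i + 1),
              ((Nat.choose (m + k - i) l : ℂ)) • M (m + k - i + (n + i) - l) (M l x y) w := by
    intro i _
    rw [Jc_sum, smul_sub]
  rw [Finset.sum_congr rfl hJc, Finset.sum_sub_distrib]
  -- Step 1: the reflected T2 sum
  have hrefl : (∑ i ∈ Finset.range (k + 1), ((-1 : ℂ) ^ i * (Nat.choose k i : ℂ)) •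
        (M (m + k - i) x (M (n + i) y w) - M (n + i) y (M (m + k - i) x w)))
      = ∑ i ∈ Finset.range (k + 1), ((-1 : ℂ) ^ i * (Nat.choose k i : ℂ)) •
        (M (m + k - i) x (M (n + i) y w)
          - ((-1 : ℂ) ^ k) • M (n + k - i) y (M (m + i) x w)) := by
    simp only [smul_sub, Finset.sum_sub_distrib]
    congr 1
    rw [← Finset.sum_range_reflect (fun i => ((-1 : ℂ) ^ i * (Nat.choose k i : ℂ)) •
        (M (n + i) y (M (m + k - i) x w))) (k + 1)]
    apply Finset.sum_congr rfl
    intro i hi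
    simp only [Finset.mem_range] at hi
    simp only [Nat.add_sub_cancel]
    rw [show m + k - (k - i) = m + i from by omega, show n + (k - i) = n + k - i from by omega,
      Nat.choose_symm (by omega : i ≤ k), neg_one_pow_sub k i (by omega), smul_smul]
    congr 1
    ring
  -- Step 2: the double sum
  have hdouble : (∑ i ∈ Finset.range (k + 1), ((-1 : ℂ) ^ i * (Nat.choose k i : ℂ)) •
        ∑ l ∈ Finset.range (m + k - i + 1),
          ((Nat.choose (m + k - i) l : ℂ)) • M (m + k - i + (n + i) - l) (M l x y) w)
      = ∑ i ∈ Finset.range (m + 1), ((Nat.choose m i : ℂ)) • M (m + n - i) (M (k + i) x y) w := by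
    have hinner : ∀ i ∈ Finset.range (k + 1),
        ((-1 : ℂ) ^ i * (Nat.choose k i : ℂ)) •
          (∑ l ∈ Finset.range (m + k - i + 1),
            ((Nat.choose (m + k - i) l : ℂ)) • M (m + k - i + (n + i) - l) (M l x y) w)
        = ∑ l ∈ Finset.range (m + k + 1),
            (((-1 : ℂ) ^ i * (Nat.choose k i : ℂ)) * (Nat.choose (m + k - i) l : ℂ)) •
              M (m + n + k - l) (M l x y) w := by
      intro i hi
      simp only [Finset.mem_range] at hi
      rw [Finset.smul_sum]
      rw [Finset.sum_subset (Finset.range_subset_range.2 (by omega : m + k - i + 1 ≤ m + k + 1))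
        (fun l _ hl => by
          rw [Nat.choose_eq_zero_of_lt (show m + k - i < l from by
            simp only [Finset.mem_range, not_lt] at hl; omega)]
          simp)]
      apply Finset.sum_congr rfl
      intro l _
      rw [smul_smul, show m + k - i + (n + i) - l = m + n + k - l from by omega]
    rw [Finset.sum_congr rfl hinner, Finset.sum_comm]
    have hvan : ∀ l ∈ Finset.range (m + k + 1),
        (∑ i ∈ Finset.range (k + 1),
          (((-1 : ℂ) ^ i * (Nat.choose k i : ℂ)) * (Nat.choose (m + k - i) l : ℂ)) •
            M (m + n + k - l) (M l x y) w)
        = (if k ≤ l then (Nat.choose m (l - k) : ℂ) else 0) • M (m + n + k - l) (M l x y) w := by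
      intro l _
      rw [← Finset.sum_smul, vander k l m]
    rw [Finset.sum_congr rfl hvan]
    rw [show m + k + 1 = m + k + 1 from rfl]
    rw [sum_range_offset m k _ (fun l hl => by rw [if_neg (by omega)]; simp)]
    apply Finset.sum_congr rfl
    intro j _
    rw [if_pos (by omega), show k + j - k = j from by omega,
      show m + n + k - (k + j) = m + n - j from by omega]
  rw [hrefl, hdouble]


section Quot

variable (M : ℕ → (ℕ →₀ S) →ₗ[ℂ] (ℕ →₀ S) →ₗ[ℂ] (ℕ →₀ S)) (I : Submodule ℂ (ℕ →₀ S))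
  (hI : FIsIdeal M I)

/-- `D` on the quotient. -/
noncomputable def Dq : ((ℕ →₀ S) ⧸ I) →ₗ[ℂ] ((ℕ →₀ S) ⧸ I) :=
  Submodule.mapQ I I (Dop S) (fun a ha => hI.1 a ha)

lemma Dq_mk (x : ℕ →₀ S) :
    Dq M I hI (Submodule.Quotient.mk x) = Submodule.Quotient.mk (Dop S x) := rfl

lemma Dq_pow_mk (k : ℕ) (x : ℕ →₀ S) :
    (Dq M I hI ^ k) (Submodule.Quotient.mk x) = Submodule.Quotient.mk ((Dop S ^ k) x) := by
  induction k with
  | zero => simp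
  | succ k ih =>
      rw [pow_succ', Module.End.mul_apply, ih, Dq_mk, pow_succ', Module.End.mul_apply]

/-- The products on the quotient. -/
noncomputable def mulqAux (n : ℕ) :
    (ℕ →₀ S) →ₗ[ℂ] (((ℕ →₀ S) ⧸ I) →ₗ[ℂ] ((ℕ →₀ S) ⧸ I)) where
  toFun x := Submodule.mapQ I I (M n x) (fun a ha => (hI.2 n x a ha).1)
  map_add' x y := by
    refine Submodule.linearMap_qext _ (LinearMap.ext fun a => ?_)
    simp only [LinearMap.comp_apply, Submodule.mkQ_apply, Submodule.mapQ_apply,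
      LinearMap.add_apply, map_add, Submodule.Quotient.mk_add]
  map_smul' c x := by
    refine Submodule.linearMap_qext _ (LinearMap.ext fun a => ?_)
    simp only [LinearMap.comp_apply, Submodule.mkQ_apply, Submodule.mapQ_apply,
      LinearMap.smul_apply, map_smul, RingHom.id_apply, Submodule.Quotient.mk_smul]

noncomputable def mulq (n : ℕ) :
    ((ℕ →₀ S) ⧸ I) →ₗ[ℂ] (((ℕ →₀ S) ⧸ I) →ₗ[ℂ] ((ℕ →₀ S) ⧸ I)) :=
  Submodule.liftQ I (mulqAux M I hI n) (by
    intro a ha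
    refine Submodule.linearMap_qext _ (LinearMap.ext fun y => ?_)
    simp only [LinearMap.comp_apply, Submodule.mkQ_apply, LinearMap.zero_apply]
    exact (Submodule.Quotient.mk_eq_zero I).2 ((hI.2 n y a ha).2))

lemma mulq_mk (n : ℕ) (x y : ℕ →₀ S) :
    mulq M I hI n (Submodule.Quotient.mk x) (Submodule.Quotient.mk y)
      = Submodule.Quotient.mk (M n x y) := rfl

end Quot

/-- The quotient vertex Lie algebra. -/
noncomputable def VLq (A : Formula S) (M : ℕ → (ℕ →₀ S) →ₗ[ℂ] (ℕ →₀ S) →ₗ[ℂ] (ℕ →₀ S))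
    (hM : ExtProp A M) (I : Submodule ℂ (ℕ →₀ S)) (hI : FIsIdeal M I)
    (hdef : JDefects A M ∪ SSDefects A ⊆ ↑I) : VLBundle.{u} where
  carrier := (ℕ →₀ S) ⧸ I
  D := Dq M I hI
  mul := mulq M I hI
  trunc := by
    intro u v
    obtain ⟨x, rfl⟩ := Submodule.Quotient.mk_surjective I u
    obtain ⟨y, rfl⟩ := Submodule.Quotient.mk_surjective I v
    obtain ⟨N, hN⟩ := exists_bound hM x y
    exact ⟨N, fun n hn => by rw [mulq_mk, hN n hn, Submodule.Quotient.mk_zero]⟩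
  dLeft := by
    intro n u v
    obtain ⟨x, rfl⟩ := Submodule.Quotient.mk_surjective I u
    obtain ⟨y, rfl⟩ := Submodule.Quotient.mk_surjective I v
    rw [Dq_mk, mulq_mk, mulq_mk, hM.2.1, Submodule.Quotient.mk_smul]
  dLeftZero := by
    intro u v
    obtain ⟨x, rfl⟩ := Submodule.Quotient.mk_surjective I u
    obtain ⟨y, rfl⟩ := Submodule.Quotient.mk_surjective I v
    rw [Dq_mk, mulq_mk, hM.2.2.1, Submodule.Quotient.mk_zero]
  leibniz := by
    intro n u v
    obtain ⟨x, rfl⟩ := Submodule.Quotient.mk_surjective I u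
    obtain ⟨y, rfl⟩ := Submodule.Quotient.mk_surjective I v
    rw [mulq_mk, Dq_mk, Dq_mk, Dq_mk, mulq_mk, mulq_mk, hM.2.2.2, Submodule.Quotient.mk_add]
  skew := by
    intro n u v
    obtain ⟨x, rfl⟩ := Submodule.Quotient.mk_surjective I u
    obtain ⟨y, rfl⟩ := Submodule.Quotient.mk_surjective I v
    obtain ⟨N, hN⟩ := exists_bound hM y x
    have hb : ∀ k, N ≤ k → skc n k • ((Dop S ^ k) (M (n + k) y x)) = 0 := by
      intro k hk; rw [hN (n + k) (by omega)]; simp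
    have e : ∀ k : ℕ, ((-1 : ℂ) ^ (n + k) / (Nat.factorial k : ℂ)) •
          ((Dq M I hI ^ k) (mulq M I hI (n + k) (Submodule.Quotient.mk y) (Submodule.Quotient.mk x)))
        = I.mkQ (skc n k • ((Dop S ^ k) (M (n + k) y x))) := by
      intro k
      rw [mulq_mk, Dq_pow_mk, skc, map_smul, Submodule.mkQ_apply]
    have hmap := I.mkQ.toAddMonoidHom.map_finsum
      (f := fun k => skc n k • ((Dop S ^ k) (M (n + k) y x))) (support_finite_of_bound hb)
    simp only [LinearMap.toAddMonoidHom_coe] at hmap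
    rw [finsum_congr e, ← hmap]
    rw [mulq_mk]
    have : (Submodule.Quotient.mk (M n x y) : (ℕ →₀ S) ⧸ I)
        = -I.mkQ (∑ᶠ k : ℕ, skc n k • (Dop S ^ k) (M (n + k) y x)) ↔
        SkD M n x y ∈ I := by
      rw [← map_neg, Submodule.mkQ_apply, Submodule.Quotient.eq, SkD]
      constructor
      · intro h; simpa [sub_neg_eq_add] using h
      · intro h; simpa [sub_neg_eq_add] using h
    exact this.2 (SkD_mem hM hI (fun z hz => hdef (Or.inr hz)) x y n)
  jacobi := by
    intro k m n u v z
    obtain ⟨x, rfl⟩ := Submodule.Quotient.mk_surjective I u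
    obtain ⟨y, rfl⟩ := Submodule.Quotient.mk_surjective I v
    obtain ⟨w, rfl⟩ := Submodule.Quotient.mk_surjective I z
    have e1 : ∀ i : ℕ, ((-1 : ℂ) ^ i * (Nat.choose k i : ℂ)) •
          (mulq M I hI (m + k - i) (Submodule.Quotient.mk x)
            (mulq M I hI (n + i) (Submodule.Quotient.mk y) (Submodule.Quotient.mk w))
            - ((-1 : ℂ) ^ k) • mulq M I hI (n + k - i) (Submodule.Quotient.mk y)
              (mulq M I hI (m + i) (Submodule.Quotient.mk x) (Submodule.Quotient.mk w)))
        = I.mkQ (((-1 : ℂ) ^ i * (Nat.choose k i : ℂ)) •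
            (M (m + k - i) x (M (n + i) y w) - ((-1 : ℂ) ^ k) • M (n + k - i) y (M (m + i) x w))) := by
      intro i
      rw [mulq_mk, mulq_mk, mulq_mk, mulq_mk, map_smul, map_sub, map_smul, Submodule.mkQ_apply,
        Submodule.mkQ_apply]
    have e2 : ∀ i : ℕ, ((Nat.choose m i : ℂ)) •
          mulq M I hI (m + n - i) (mulq M I hI (k + i) (Submodule.Quotient.mk x)
            (Submodule.Quotient.mk y)) (Submodule.Quotient.mk w)
        = I.mkQ (((Nat.choose m i : ℂ)) • M (m + n - i) (M (k + i) x y) w) := by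
      intro i
      rw [mulq_mk, mulq_mk, map_smul, Submodule.mkQ_apply]
    have hb1 : ∀ i, k + 1 ≤ i → ((-1 : ℂ) ^ i * (Nat.choose k i : ℂ)) •
        (M (m + k - i) x (M (n + i) y w) - ((-1 : ℂ) ^ k) • M (n + k - i) y (M (m + i) x w)) = 0 := by
      intro i hi; simp [Nat.choose_eq_zero_of_lt (by omega : k < i)]
    have hb2 : ∀ i, m + 1 ≤ i →
        ((Nat.choose m i : ℂ)) • M (m + n - i) (M (k + i) x y) w = 0 := by
      intro i hi; simp [Nat.choose_eq_zero_of_lt (by omega : m < i)]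
    have hmap1 := I.mkQ.toAddMonoidHom.map_finsum
      (f := fun i => ((-1 : ℂ) ^ i * (Nat.choose k i : ℂ)) •
        (M (m + k - i) x (M (n + i) y w) - ((-1 : ℂ) ^ k) • M (n + k - i) y (M (m + i) x w)))
      (support_finite_of_bound hb1)
    have hmap2 := I.mkQ.toAddMonoidHom.map_finsum
      (f := fun i => ((Nat.choose m i : ℂ)) • M (m + n - i) (M (k + i) x y) w)
      (support_finite_of_bound hb2)
    simp only [LinearMap.toAddMonoidHom_coe] at hmap1 hmap2
    rw [finsum_congr e1, finsum_congr e2, ← hmap1, ← hmap2]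
    rw [Submodule.mkQ_apply, Submodule.mkQ_apply, Submodule.Quotient.eq]
    rw [Jc_general hM k m n x y w]
    apply Submodule.sum_mem
    intro i _
    exact I.smul_mem _ (Jc_mem hM hI (fun z hz => hdef (Or.inl hz)) x y w (m + k - i) (n + i))


lemma finsum_single_eq_self (z : ℕ →₀ S) : ∑ᶠ k : ℕ, Finsupp.single k (z k) = z := by
  have hsupp : (Function.support fun k => Finsupp.single k (z k)) ⊆ ↑z.support := by
    intro k hk
    simp only [Finset.mem_coe, Finsupp.mem_support_iff]
    intro hzk
    exact hk (by simp [hzk])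
  rw [finsum_eq_sum_of_support_subset _ hsupp]
  exact Finsupp.sum_single z

section Phit

variable (V : VLBundle.{u}) (φ : S →ₗ[ℂ] V.carrier)

/-- The induced map `ℂ[D]⊗S → V`. -/
noncomputable def phit : (ℕ →₀ S) →ₗ[ℂ] V.carrier :=
  Finsupp.lsum ℂ (fun k => (V.D ^ k) ∘ₗ φ)

lemma phit_single (k : ℕ) (u : S) : phit V φ (Finsupp.single k u) = (V.D ^ k) (φ u) := by
  simp [phit]

lemma phit_single0 (u : S) : phit V φ (Finsupp.single 0 u) = φ u := by
  rw [phit_single, pow_zero, Module.End.one_apply]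

lemma phit_eq_finsum (z : ℕ →₀ S) : phit V φ z = ∑ᶠ k : ℕ, (V.D ^ k) (φ (z k)) := by
  have hsupp : (Function.support fun k => (V.D ^ k) (φ (z k))) ⊆ ↑z.support := by
    intro k hk
    simp only [Finset.mem_coe, Finsupp.mem_support_iff]
    intro hzk
    exact hk (by simp [hzk])
  rw [finsum_eq_sum_of_support_subset _ hsupp]
  rfl

lemma phit_Dop (z : ℕ →₀ S) : phit V φ (Dop S z) = V.D (phit V φ z) := by
  induction z using Finsupp.induction_linear with
  | zero => simp
  | add f g hf hg => rw [map_add, map_add, hf, hg, map_add (phit V φ) f g]; exact (map_add V.D _ _).symm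
  | single k u =>
      rw [Dop_single, phit_single, phit_single, pow_succ', Module.End.mul_apply]

lemma phit_Dop_pow (k : ℕ) (z : ℕ →₀ S) :
    phit V φ ((Dop S ^ k) z) = (V.D ^ k) (phit V φ z) := by
  induction k with
  | zero => simp
  | succ k ih => rw [pow_succ', pow_succ', Module.End.mul_apply, Module.End.mul_apply,
      phit_Dop, ih]

lemma V_dl (n : ℕ) (a b : V.carrier) :
    V.mul n (V.D a) b = (-(n : ℂ)) • V.mul (n - 1) a b := by
  cases n with
  | zero => rw [V.dLeftZero]; simp
  | succ n => rw [V.dLeft]; norm_num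

lemma phit_mul (A : Formula S) (M : ℕ → (ℕ →₀ S) →ₗ[ℂ] (ℕ →₀ S) →ₗ[ℂ] (ℕ →₀ S))
    (hM : ExtProp A M)
    (hcompat : ∀ (n : ℕ) (u v : S),
      (∑ᶠ k : ℕ, (V.D ^ k) (φ ((A.F n u v) k))) = V.mul n (φ u) (φ v)) :
    ∀ (x y : ℕ →₀ S) (n : ℕ), phit V φ (M n x y) = V.mul n (phit V φ x) (phit V φ y) := by
  have hD1 : ∀ x y : ℕ →₀ S, (∀ n, phit V φ (M n x y) = V.mul n (phit V φ x) (phit V φ y)) →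
      ∀ n, phit V φ (M n (Dop S x) y) = V.mul n (phit V φ (Dop S x)) (phit V φ y) := by
    intro x y h n
    rw [phit_Dop, Mdl hM, map_smul, h (n - 1), V_dl]
  have hD2 : ∀ x y : ℕ →₀ S, (∀ n, phit V φ (M n x y) = V.mul n (phit V φ x) (phit V φ y)) →
      ∀ n, phit V φ (M n x (Dop S y)) = V.mul n (phit V φ x) (phit V φ (Dop S y)) := by
    intro x y h n
    rw [Mdr hM, map_sub, phit_Dop, phit_Dop, h n, hD1 x y h n, phit_Dop, V.leibniz]
    abel
  have hsingle : ∀ (j : ℕ), ∀ (k : ℕ) (u v : S) (n : ℕ),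
      phit V φ (M n (Finsupp.single j u) (Finsupp.single k v))
        = V.mul n (phit V φ (Finsupp.single j u)) (phit V φ (Finsupp.single k v)) := by
    intro j
    induction j with
    | zero =>
        intro k
        induction k with
        | zero =>
            intro u v n
            rw [hM.1, phit_single0, phit_single0, ← hcompat n u v, phit_eq_finsum]
        | succ k ih =>
            intro u v n
            rw [← Dop_single]
            exact hD2 _ _ (fun n => ih u v n) n
    | succ j ih =>
        intro k u v n
        rw [← Dop_single]
        exact hD1 _ _ (fun n => ih k u v n) n
  intro x
  induction x using Finsupp.induction_linear with
  | zero => intro y n; simp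
  | add f g hf hg =>
      intro y n
      simp only [map_add, LinearMap.add_apply]
      rw [hf y n, hg y n]
  | single j u =>
      intro y
      induction y using Finsupp.induction_linear with
      | zero => intro n; simp
      | add f g hf hg =>
          intro n
          simp only [map_add]
          rw [hf n, hg n]
      | single k v => exact hsingle j k u v

end Phit

end Stmt14Aux

/-- a formula `S` is `(J+ss)`-injective (i.e. `S ∩ ⟨J+ss⟩ = 0`, where
`⟨J+ss⟩` is the smallest ideal of `ℂ[D]⊗S` containing all commutator and skew defects)
if and only if there is a vertex Lie algebra `V` and an injective linear map
`φ : S → V` such that the induced map `φ̃ : ℂ[D]⊗S → V`, `D^k⊗u ↦ D^k(φ u)`,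
is compatible with the products, i.e. `φ̃(uₙv) = φ(u)ₙφ(v)` for all `u, v ∈ S`. -/
theorem stmt14 (A : Formula S)
    (M : ℕ → (ℕ →₀ S) →ₗ[ℂ] (ℕ →₀ S) →ₗ[ℂ] (ℕ →₀ S)) (hM : ExtProp A M)
    (I : Submodule ℂ (ℕ →₀ S)) (hI : FIsIdeal M I)
    (hdef : JDefects A M ∪ SSDefects A ⊆ I)
    (hmin : ∀ J : Submodule ℂ (ℕ →₀ S),
      FIsIdeal M J → JDefects A M ∪ SSDefects A ⊆ J → I ≤ J) :
    (∀ u : S, Finsupp.single 0 u ∈ I → u = 0) ↔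
      ∃ (V : VLBundle.{u}) (φ : S →ₗ[ℂ] V.carrier),
        Function.Injective φ ∧
        ∀ (n : ℕ) (u v : S),
          (∑ᶠ k : ℕ, (V.D ^ k) (φ ((A.F n u v) k))) = V.mul n (φ u) (φ v) := by
  constructor
  · -- forward: quotient construction
    intro hinj0
    refine ⟨VLq A M hM I hI hdef, I.mkQ.comp (Finsupp.lsingle 0), ?_, ?_⟩
    · intro u v huv
      have huv' : (Submodule.Quotient.mk (Finsupp.single 0 u) : (ℕ →₀ S) ⧸ I)
          = Submodule.Quotient.mk (Finsupp.single 0 v) := huv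
      have h1 : Finsupp.single 0 u - Finsupp.single 0 v ∈ I := (Submodule.Quotient.eq I).1 huv'
      have h2 : Finsupp.single 0 (u - v) ∈ I := by rwa [Finsupp.single_sub]
      have h3 := hinj0 _ h2
      exact sub_eq_zero.1 h3
    · intro n u v
      show (∑ᶠ k : ℕ, ((Dq M I hI) ^ k) ((I.mkQ.comp (Finsupp.lsingle 0)) ((A.F n u v) k)))
          = mulq M I hI n (I.mkQ (Finsupp.single 0 u)) (I.mkQ (Finsupp.single 0 v))
      have e : ∀ k : ℕ, ((Dq M I hI) ^ k) ((I.mkQ.comp (Finsupp.lsingle 0)) ((A.F n u v) k))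
          = I.mkQ (Finsupp.single k ((A.F n u v) k)) := by
        intro k
        simp only [LinearMap.coe_comp, Function.comp_apply, Finsupp.lsingle_apply,
          Submodule.mkQ_apply]
        rw [Dq_pow_mk, Dop_pow_single]
      have hfin : (Function.support fun k => Finsupp.single k ((A.F n u v) k)).Finite := by
        apply Set.Finite.subset (A.F n u v).support.finite_toSet
        intro k hk
        simp only [Finset.mem_coe, Finsupp.mem_support_iff]
        intro hzk
        exact hk (by simp [hzk])
      have hmap := I.mkQ.toAddMonoidHom.map_finsum
        (f := fun k => Finsupp.single k ((A.F n u v) k)) hfin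
      simp only [LinearMap.toAddMonoidHom_coe] at hmap
      rw [finsum_congr e, ← hmap, finsum_single_eq_self, Submodule.mkQ_apply,
        Submodule.mkQ_apply, Submodule.mkQ_apply, mulq_mk, hM.1]
  · -- backward: minimality of I
    rintro ⟨V, φ, hinj, hcompat⟩ u hu
    have hkey := phit_mul V φ A M hM hcompat
    have hker : FIsIdeal M (LinearMap.ker (phit V φ)) := by
      constructor
      · intro a ha
        rw [LinearMap.mem_ker] at ha ⊢
        rw [phit_Dop, ha, map_zero]
      · intro n x a ha
        rw [LinearMap.mem_ker] at ha
        constructor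
        · rw [LinearMap.mem_ker, hkey, ha, map_zero]
        · rw [LinearMap.mem_ker, hkey, ha, map_zero, LinearMap.zero_apply]
    have hsub : JDefects A M ∪ SSDefects A ⊆ ↑(LinearMap.ker (phit V φ)) := by
      apply Set.union_subset
      · rintro _ ⟨a, b, c, m, n, rfl⟩
        simp only [SetLike.mem_coe, LinearMap.mem_ker]
        have hb1 : ∀ i, m + 1 ≤ i →
            ((Nat.choose m i : ℂ)) • M (m + n - i) (A.F i a b) (Finsupp.single 0 c) = 0 := by
          intro i hi
          simp [Nat.choose_eq_zero_of_lt (by omega : m < i)]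
        have hmapf := (phit V φ).toAddMonoidHom.map_finsum
          (f := fun i => ((Nat.choose m i : ℂ)) • M (m + n - i) (A.F i a b) (Finsupp.single 0 c))
          (support_finite_of_bound hb1)
        simp only [LinearMap.toAddMonoidHom_coe] at hmapf
        rw [map_sub, map_sub, hkey, hkey, hkey, hkey, hmapf]
        have e3 : ∀ i : ℕ, phit V φ
              (((Nat.choose m i : ℂ)) • M (m + n - i) (A.F i a b) (Finsupp.single 0 c))
            = ((Nat.choose m i : ℂ)) •
                V.mul (m + n - i) (V.mul i (φ a) (φ b)) (φ c) := by
          intro i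
          rw [map_smul, hkey, ← hM.1 i a b, hkey, phit_single0, phit_single0, phit_single0]
        rw [finsum_congr e3]
        simp only [phit_single0]
        have hj0 := V.jacobi 0 m n (φ a) (φ b) (φ c)
        have hcol : (∑ᶠ i : ℕ, ((-1 : ℂ) ^ i * (Nat.choose 0 i : ℂ)) •
              (V.mul (m + 0 - i) (φ a) (V.mul (n + i) (φ b) (φ c))
                - ((-1 : ℂ) ^ 0) • V.mul (n + 0 - i) (φ b) (V.mul (m + i) (φ a) (φ c))))
            = V.mul m (φ a) (V.mul n (φ b) (φ c))
              - V.mul n (φ b) (V.mul m (φ a) (φ c)) := by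
          rw [finsum_eq_single _ 0
            (fun i hi => by simp [Nat.choose_eq_zero_of_lt (Nat.pos_of_ne_zero hi)])]
          simp
        have e4 : (∑ᶠ i : ℕ, ((Nat.choose m i : ℂ)) •
              V.mul (m + n - i) (V.mul (0 + i) (φ a) (φ b)) (φ c))
            = ∑ᶠ i : ℕ, ((Nat.choose m i : ℂ)) •
              V.mul (m + n - i) (V.mul i (φ a) (φ b)) (φ c) :=
          finsum_congr fun i => by rw [zero_add]
        rw [hcol, e4] at hj0
        rw [hj0]
        exact sub_self _
      · rintro _ ⟨a, b, n, rfl⟩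
        simp only [SetLike.mem_coe, LinearMap.mem_ker]
        obtain ⟨N, hN⟩ := A.trunc b a
        have hb2 : ∀ k, N ≤ k → ((-1 : ℂ) ^ (n + k) / (Nat.factorial k : ℂ)) •
            ((Dop S ^ k) (A.F (n + k) b a)) = 0 := by
          intro k hk
          rw [hN (n + k) (by omega)]
          simp
        have hmapf := (phit V φ).toAddMonoidHom.map_finsum
          (f := fun k => ((-1 : ℂ) ^ (n + k) / (Nat.factorial k : ℂ)) •
            ((Dop S ^ k) (A.F (n + k) b a)))
          (support_finite_of_bound hb2)
        simp only [LinearMap.toAddMonoidHom_coe] at hmapf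
        rw [map_add, hmapf, ← hM.1 n a b, hkey, phit_single0, phit_single0]
        have e5 : ∀ k : ℕ, phit V φ (((-1 : ℂ) ^ (n + k) / (Nat.factorial k : ℂ)) •
              ((Dop S ^ k) (A.F (n + k) b a)))
            = ((-1 : ℂ) ^ (n + k) / (Nat.factorial k : ℂ)) •
                ((V.D ^ k) (V.mul (n + k) (φ b) (φ a))) := by
          intro k
          rw [map_smul, phit_Dop_pow, ← hM.1 (n + k) b a, hkey, phit_single0, phit_single0]
        rw [finsum_congr e5, V.skew n (φ a) (φ b)]
        exact neg_add_cancel _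
    have hIker := hmin _ hker hsub
    have h0 : phit V φ (Finsupp.single 0 u) = 0 := hIker hu
    rw [phit_single0] at h0
    have h1 : φ u = φ 0 := by rw [map_zero]; exact h0
    exact hinj h1

end
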